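/- Let μ > 0 and λ ∈ [−1,0), and set b(t) := μ(1+t)^{−λ}, so b′(t) = −λμ(1+t)^{−λ−1} ≥ 0. For a fixed r ≥ 0 define m_v(t) := r² − b(t)²/4 − b′(t)/2 and, where m_v(t) < 0, h(t) := √( b(t)²/4 + b′(t)/2 − r² ) = √(|m_v(t)|). Then for every ε ∈ (0,1/2) there exist constants C1 > 0, C2 > 0, C > 0 and T ≥ 0, depending only on μ, λ and ε, such that for all t ≥ T and all r ≥ 0 with h(t) ≥ ε·b(t) (the elliptic-zone condition), the two-sided estimate holds: −C2·r²/b(t) + b′(t)/b(t) − C·(1+t)^{λ−2} ≤ h(t) + h′(t)/(2h(t)) − b(t)/2 ≤ −C1·r²/b(t) + b′(t)/b(t) + C·(1+t)^{λ−2}, where h′(t) denotes the derivative of h at t (with r held fixed). -/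

import Mathlib

set_option maxHeartbeats 1000000


private lemma key_alg (ε B B' B'' H r : ℝ) (hε1 : 0 < ε) (hε2 : ε < 1/2)
    (hB : 0 < B) (hB' : 0 ≤ B') (hB'' : B'' ≤ 0) (hr : 0 ≤ r)
    (hH2 : H^2 = B^2/4 + B'/2 - r^2) (hH : ε*B ≤ H)
    (hδ : B' ≤ B^2/(6*(1+3/(4*ε^2)))) :
    (-2*r^2/B + B'/B + B''/(8*ε^2*B^2) - (1+3/(4*ε^2))*B'^2/B^3
       ≤ H + ((B*B'/2 + B''/2)/(2*H))/(2*H) - B/2)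
    ∧ (H + ((B*B'/2 + B''/2)/(2*H))/(2*H) - B/2 ≤ -(1/3)*r^2/B + B'/B) := by
  set M : ℝ := 1 + 3/(4*ε^2) with hMdef
  have hMpos : (0:ℝ) < M := by positivity
  have hH0 : 0 < H := lt_of_lt_of_le (mul_pos hε1 hB) hH
  have hM4 : 4 ≤ M := by
    have h1 : 4*ε^2 < 1 := by nlinarith
    have h2 : (3:ℝ) < 3/(4*ε^2) := by
      rw [lt_div_iff₀ (by positivity)]; nlinarith
    rw [hMdef]; linarith
  have hδ2 : B' ≤ B^2/2 := by
    have h1 : B^2/(6*M) ≤ B^2/2 := by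
      apply div_le_div_of_nonneg_left (by positivity) (by norm_num)
      linarith
    linarith
  have hH2' : ε^2*B^2 ≤ H^2 := by nlinarith [mul_le_mul hH hH (by positivity : (0:ℝ) ≤ ε*B) hH0.le]
  have hHsq : H^2 ≤ B^2/2 := by nlinarith [sq_nonneg r]
  have hHB : H ≤ B := by nlinarith [mul_pos hH0 hB]
  have hbr_pos : (0:ℝ) ≤ 1/(2*B*(H+B/2)) + (B+2*H)/(4*B*H^2) := by positivity
  have hbr_le : 1/(2*B*(H+B/2)) + (B+2*H)/(4*B*H^2) ≤ M/B^2 := by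
    have h1 : 1/(2*B*(H+B/2)) ≤ 1/B^2 := by
      rw [div_le_div_iff₀ (by positivity) (by positivity)]
      nlinarith [mul_pos hB hH0]
    have h2 : (B+2*H)/(4*B*H^2) ≤ (3/(4*ε^2))/B^2 := by
      rw [div_le_div_iff₀ (by positivity) (by positivity), div_mul_eq_mul_div,
        le_div_iff₀ (by positivity)]
      nlinarith [mul_nonneg (mul_nonneg (sq_nonneg ε) (sq_nonneg B)) (sub_nonneg.mpr hHB),
        mul_nonneg hB.le (sub_nonneg.mpr hH2')]
    have h3 : M/B^2 = 1/B^2 + (3/(4*ε^2))/B^2 := by rw [hMdef]; ring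
    linarith
  have hD_id : 1/(2*(H+B/2)) + B/(8*H^2) - 1/B
      = (B/2 - H) * (1/(2*B*(H+B/2)) + (B+2*H)/(4*B*H^2)) := by
    field_simp
    ring
  have hr2 : r^2 = B^2/4 + B'/2 - H^2 := by linarith
  have hE : H + ((B*B'/2 + B''/2)/(2*H))/(2*H) - B/2
      = -r^2/(H+B/2) + B'/B + B'*(1/(2*(H+B/2)) + B/(8*H^2) - 1/B) + B''/(8*H^2) := by
    rw [hr2]
    have hne : H + B/2 ≠ 0 := by positivity
    field_simp [hne, hH0.ne', hB.ne']
    ring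
  have hDub : B'*(1/(2*(H+B/2)) + B/(8*H^2) - 1/B) ≤ 1/3*r^2/B := by
    rcases le_or_gt H (B/2) with hc | hc
    · have h3 : B'*(1/(2*(H+B/2)) + B/(8*H^2) - 1/B) ≤ B'*((B/2-H)*(M/B^2)) := by
        rw [hD_id]
        apply mul_le_mul_of_nonneg_left _ hB'
        apply mul_le_mul_of_nonneg_left hbr_le (by linarith)
      have h4 : B'*((B/2-H)*(M/B^2)) ≤ (B^2/(6*M))*((B/2-H)*(M/B^2)) := by
        apply mul_le_mul_of_nonneg_right hδ
        exact mul_nonneg (by linarith) (by positivity)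
      have h5 : (B^2/(6*M))*((B/2-H)*(M/B^2)) = (B/2-H)/6 := by field_simp
      have h6 : (B/2-H)/6 ≤ 1/3*r^2/B := by
        rw [div_le_div_iff₀ (by norm_num) hB]
        nlinarith [mul_nonneg (by linarith : (0:ℝ) ≤ B/2 - H) hH0.le]
      linarith
    · have hd0 : (B/2 - H) * (1/(2*B*(H+B/2)) + (B+2*H)/(4*B*H^2)) ≤ 0 :=
        mul_nonpos_of_nonpos_of_nonneg (by linarith) hbr_pos
      have h7 : B'*(1/(2*(H+B/2)) + B/(8*H^2) - 1/B) ≤ 0 := by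
        rw [hD_id]; exact mul_nonpos_of_nonneg_of_nonpos hB' hd0
      have h8 : (0:ℝ) ≤ 1/3*r^2/B := by positivity
      linarith
  have hDlb : -(M*B'^2/B^3) ≤ B'*(1/(2*(H+B/2)) + B/(8*H^2) - 1/B) := by
    rcases le_or_gt H (B/2) with hc | hc
    · have h1 : 0 ≤ B'*(1/(2*(H+B/2)) + B/(8*H^2) - 1/B) := by
        rw [hD_id]
        exact mul_nonneg hB' (mul_nonneg (by linarith) hbr_pos)
      have h2 : (0:ℝ) ≤ M*B'^2/B^3 := by positivity
      linarith
    · have h7 : H - B/2 ≤ B'/B := by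
        rw [le_div_iff₀ hB]
        nlinarith [sq_nonneg r, mul_nonneg (by linarith : (0:ℝ) ≤ H - B/2) hH0.le]
      have hp : B'*((H-B/2)*(1/(2*B*(H+B/2)) + (B+2*H)/(4*B*H^2))) ≤ M*B'^2/B^3 := by
        calc B'*((H-B/2)*(1/(2*B*(H+B/2)) + (B+2*H)/(4*B*H^2)))
            ≤ B'*((B'/B)*(M/B^2)) := by
              apply mul_le_mul_of_nonneg_left _ hB'
              exact mul_le_mul h7 hbr_le hbr_pos (by positivity)
          _ = M*B'^2/B^3 := by field_simp
      have heq : B'*(1/(2*(H+B/2)) + B/(8*H^2) - 1/B)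
          = -(B'*((H-B/2)*(1/(2*B*(H+B/2)) + (B+2*H)/(4*B*H^2)))) := by
        rw [hD_id]; ring
      rw [heq]; linarith
  have hub1 : -r^2/(H+B/2) ≤ -(2/3)*r^2/B := by
    have h1 : (2/3)*r^2/B ≤ r^2/(H+B/2) := by
      rw [div_le_div_iff₀ hB (by positivity)]
      nlinarith [mul_nonneg (sq_nonneg r) (by linarith [hHB] : (0:ℝ) ≤ 3*B/2 - (H+B/2))]
    have h2 : -r^2/(H+B/2) = -(r^2/(H+B/2)) := by ring
    have h3 : -(2/3)*r^2/B = -((2/3)*r^2/B) := by ring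
    rw [h2, h3]; linarith
  have hlb1 : -2*r^2/B ≤ -r^2/(H+B/2) := by
    have h1 : r^2/(H+B/2) ≤ 2*r^2/B := by
      rw [div_le_div_iff₀ (by positivity) hB]
      nlinarith [mul_nonneg (sq_nonneg r) hH0.le]
    have h2 : -r^2/(H+B/2) = -(r^2/(H+B/2)) := by ring
    have h3 : -2*r^2/B = -(2*r^2/B) := by ring
    rw [h2, h3]; linarith
  have hB''1 : B''/(8*ε^2*B^2) ≤ B''/(8*H^2) := by
    rw [div_le_div_iff₀ (by positivity) (by positivity)]
    nlinarith [mul_nonneg (sub_nonneg.mpr hH2') (neg_nonneg.mpr hB'')]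
  have hB''2 : B''/(8*H^2) ≤ 0 := div_nonpos_of_nonpos_of_nonneg hB'' (by positivity)
  constructor
  · rw [hE]; linarith [hlb1, hB''1, hDlb]
  · rw [hE]
    ring_nf at hub1 hDub hB''2 ⊢
    linarith


set_option maxHeartbeats 1000000 in
/-- Elliptic-zone asymptotic estimate for the `v`-equation: with
`b(t) = μ(1+t)^(−λ)`, `b′(t) = −λμ(1+t)^(−λ−1)` and
`h(t) = √(b(t)²/4 + b′(t)/2 − r²)`, the quantity `h + h′/(2h) − b/2` is
comparable to `−r²/b(t) + b′(t)/b(t)` up to an error `O((1+t)^(λ−2))`. -/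
theorem elliptic_zone_estimate_v
    (μ lam ε : ℝ) (hμ : 0 < μ) (hlam : lam ∈ Set.Ico (-1:ℝ) 0)
    (hε : ε ∈ Set.Ioo (0:ℝ) (1/2:ℝ)) :
    ∃ C1 > (0:ℝ), ∃ C2 > (0:ℝ), ∃ C > (0:ℝ), ∃ T ≥ (0:ℝ),
      ∀ t : ℝ, T ≤ t → ∀ r : ℝ, 0 ≤ r →
        ∀ h : ℝ → ℝ,
          (h = fun τ =>
            Real.sqrt ((μ * (1+τ)^(-lam))^2/4 + (-lam * μ * (1+τ)^(-lam-1))/2 - r^2)) →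
          ε * (μ * (1+t)^(-lam)) ≤ h t →
          (-C2 * r^2 / (μ * (1+t)^(-lam))
              + (-lam * μ * (1+t)^(-lam-1)) / (μ * (1+t)^(-lam))
              - C * (1+t)^(lam-2)
            ≤ h t + deriv h t / (2 * h t) - (μ * (1+t)^(-lam)) / 2) ∧
          (h t + deriv h t / (2 * h t) - (μ * (1+t)^(-lam)) / 2
            ≤ -C1 * r^2 / (μ * (1+t)^(-lam))
              + (-lam * μ * (1+t)^(-lam-1)) / (μ * (1+t)^(-lam))
              + C * (1+t)^(lam-2)) := by
  obtain ⟨hε1, hε2⟩ := hε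
  obtain ⟨hlam1, hlam2⟩ := hlam
  refine ⟨1/3, by norm_num, 2, by norm_num,
    1/(8*ε^2*μ) + (1 + 3/(4*ε^2))/μ, by positivity,
    max 0 (6*(1 + 3/(4*ε^2))/μ), le_max_left _ _, ?_⟩
  intro t ht r hr h hfun hEZ
  subst hfun
  have ht0 : 0 ≤ t := le_trans (le_max_left _ _) ht
  have hP0 : (0:ℝ) < 1 + t := by linarith
  have hP1 : (1:ℝ) ≤ 1 + t := by linarith
  have hP6 : 6*(1 + 3/(4*ε^2))/μ ≤ 1 + t := by
    have := le_trans (le_max_right (0:ℝ) (6*(1 + 3/(4*ε^2))/μ)) ht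
    linarith
  -- abbreviations
  set P : ℝ := 1 + t with hPdef
  set Q : ℝ := P^(-lam) with hQdef
  set Rr : ℝ := P^(-lam-1) with hRdef
  set Z : ℝ := P^(lam-2) with hZdef
  have hQpos : 0 < Q := Real.rpow_pos_of_pos hP0 _
  have hRpos : 0 < Rr := Real.rpow_pos_of_pos hP0 _
  have hZpos : 0 < Z := Real.rpow_pos_of_pos hP0 _
  have hWpos : 0 < P^(-lam-2) := Real.rpow_pos_of_pos hP0 _
  have mulP : ∀ a b : ℝ, P^a * P^b = P^(a+b) := fun a b => (Real.rpow_add hP0 a b).symm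
  have hQ1 : 1 ≤ Q := by
    rw [hQdef]
    calc (1:ℝ) = P^(0:ℝ) := (Real.rpow_zero P).symm
      _ ≤ P^(-lam) := Real.rpow_le_rpow_of_exponent_le hP1 (by linarith)
  have hQR : Rr * P = Q := by
    rw [hQdef, hRdef]
    calc P^(-lam-1) * P = P^(-lam-1) * P^(1:ℝ) := by rw [Real.rpow_one]
      _ = P^(-lam-1+1) := mulP _ _
      _ = P^(-lam) := by norm_num
  have hW : P^(-lam-2) = Q^2*Z := by
    rw [hQdef, hZdef]
    calc P^(-lam-2) = P^((-lam) + ((-lam) + (lam-2))) := by congr 1; ring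
      _ = P^(-lam) * P^((-lam) + (lam-2)) := (mulP _ _).symm
      _ = P^(-lam) * (P^(-lam) * P^(lam-2)) := by rw [← mulP]
      _ = (P^(-lam))^2 * P^(lam-2) := by ring
  have hR2 : Rr^2 = Q^3*Z := by
    rw [hQdef, hRdef, hZdef]
    calc (P^(-lam-1))^2 = P^(-lam-1) * P^(-lam-1) := sq _
      _ = P^((-lam-1) + (-lam-1)) := mulP _ _
      _ = P^((-lam) + ((-lam) + ((-lam) + (lam-2)))) := by congr 1; ring
      _ = P^(-lam) * (P^(-lam) * (P^(-lam) * P^(lam-2))) := by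
          rw [← mulP, ← mulP, ← mulP]
      _ = (P^(-lam))^3 * P^(lam-2) := by ring
  -- the coefficients as in key_alg
  have hBpos : 0 < μ * Q := mul_pos hμ hQpos
  have hB'0 : 0 ≤ -lam*μ*Rr :=
    mul_nonneg (mul_nonneg (by linarith) hμ.le) hRpos.le
  have hB''0 : lam*(lam+1)*μ*(P^(-lam-2)) ≤ 0 := by
    have h1 : lam*(lam+1) ≤ 0 :=
      mul_nonpos_of_nonpos_of_nonneg hlam2.le (by linarith)
    have h2 : 0 < μ*(P^(-lam-2)) := mul_pos hμ hWpos
    nlinarith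
  -- elliptic zone data
  have hEZ' : ε * (μ * Q) ≤ Real.sqrt ((μ*Q)^2/4 + (-lam*μ*Rr)/2 - r^2) := hEZ
  have hH0 : 0 < Real.sqrt ((μ*Q)^2/4 + (-lam*μ*Rr)/2 - r^2) :=
    lt_of_lt_of_le (by positivity) hEZ'
  have hft_pos : 0 < (μ*Q)^2/4 + (-lam*μ*Rr)/2 - r^2 := Real.sqrt_pos.mp hH0
  set H : ℝ := Real.sqrt ((μ*Q)^2/4 + (-lam*μ*Rr)/2 - r^2) with hHdef
  have hH2 : H^2 = (μ*Q)^2/4 + (-lam*μ*Rr)/2 - r^2 := Real.sq_sqrt hft_pos.le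
  -- the derivative
  have hderiv : deriv (fun τ : ℝ =>
      Real.sqrt ((μ * (1+τ)^(-lam))^2/4 + (-lam * μ * (1+τ)^(-lam-1))/2 - r^2)) t
      = ((μ*Q)*(-lam*μ*Rr)/2 + (lam*(lam+1)*μ*(P^(-lam-2)))/2)/(2*H) := by
    have hP0' : (0:ℝ) < 1 + t := hP0
    have d1 : HasDerivAt (fun τ : ℝ => 1 + τ) 1 t := by
      simpa using (hasDerivAt_id t).const_add (1:ℝ)
    have d2 := d1.rpow_const (p := -lam) (Or.inl hP0'.ne')
    have d3 := d1.rpow_const (p := -lam-1) (Or.inl hP0'.ne')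
    have dF : HasDerivAt (fun τ : ℝ =>
        (μ * (1+τ)^(-lam))^2/4 + (-lam * μ * (1+τ)^(-lam-1))/2 - r^2)
        ((μ*Q)*(-lam*μ*Rr)/2 + (lam*(lam+1)*μ*(P^(-lam-2)))/2) t := by
      have dA := ((d2.const_mul μ).pow 2).div_const 4
      have dB := (d3.const_mul (-lam*μ)).div_const 2
      have dF0 := (dA.add dB).sub_const (r^2)
      refine dF0.congr_deriv ?_
      simp only [hQdef, hRdef, hPdef]
      rw [show (-lam-1-1 : ℝ) = -lam-2 by ring]
      push_cast
      ring
    have hne2 : (μ * (1+t)^(-lam))^2/4 + (-lam * μ * (1+t)^(-lam-1))/2 - r^2 ≠ 0 :=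
      ne_of_gt hft_pos
    have hd := (dF.sqrt hne2).deriv
    refine hd.trans ?_
    have hHeq : Real.sqrt ((μ * (1+t)^(-lam))^2/4 + (-lam * μ * (1+t)^(-lam-1))/2 - r^2)
        = H := by
      rw [hHdef, hQdef, hRdef, hPdef]
    rw [hHeq]
  -- smallness hypothesis for key_alg
  have hδ : -lam*μ*Rr ≤ (μ*Q)^2/(6*(1+3/(4*ε^2))) := by
    rw [le_div_iff₀ (by positivity)]
    have hμP : 6*(1 + 3/(4*ε^2)) ≤ μ*P := by
      rw [div_le_iff₀ hμ] at hP6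
      linarith
    have k1 : -lam*μ*Rr ≤ μ*Rr := by
      nlinarith [mul_nonneg (by linarith : (0:ℝ) ≤ 1+lam) (mul_pos hμ hRpos).le]
    calc -lam*μ*Rr*(6*(1+3/(4*ε^2))) ≤ (μ*Rr)*(6*(1+3/(4*ε^2))) :=
          mul_le_mul_of_nonneg_right k1 (by positivity)
      _ ≤ (μ*Rr)*(μ*P) := mul_le_mul_of_nonneg_left hμP (mul_pos hμ hRpos).le
      _ = μ^2*(Rr*P) := by ring
      _ = μ^2*Q := by rw [hQR]
      _ ≤ (μ*Q)^2 := by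
          nlinarith [mul_nonneg (mul_nonneg (sq_nonneg μ) hQpos.le)
            (by linarith : (0:ℝ) ≤ Q - 1)]
  -- apply the key algebraic lemma
  obtain ⟨klow, kup⟩ := key_alg ε (μ*Q) (-lam*μ*Rr) (lam*(lam+1)*μ*(P^(-lam-2))) H r
    hε1 hε2 hBpos hB'0 hB''0 hr hH2 hEZ' hδ
  -- error-term bounds
  have e1 : -((lam*(lam+1)*μ*(P^(-lam-2)))/(8*ε^2*(μ*Q)^2)) ≤ 1/(8*ε^2*μ)*Z := by
    have h1 : -(lam*(lam+1)) ≤ 1 := by nlinarith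
    have h2 : -(lam*(lam+1)*μ*(P^(-lam-2))/(8*ε^2*(μ*Q)^2))
        = (-(lam*(lam+1)))*(Z/(8*ε^2*μ)) := by
      rw [hW]
      field_simp
    rw [h2]
    calc (-(lam*(lam+1)))*(Z/(8*ε^2*μ)) ≤ 1*(Z/(8*ε^2*μ)) :=
          mul_le_mul_of_nonneg_right h1 (by positivity)
      _ = 1/(8*ε^2*μ)*Z := by ring
  have e2 : (1+3/(4*ε^2))*(-lam*μ*Rr)^2/(μ*Q)^3 ≤ (1+3/(4*ε^2))/μ*Z := by
    have h1 : lam^2 ≤ 1 := by nlinarith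
    have h2 : (1+3/(4*ε^2))*(-lam*μ*Rr)^2/(μ*Q)^3 = lam^2*((1+3/(4*ε^2))*Z/μ) := by
      have h3 : (-lam*μ*Rr)^2 = lam^2*μ^2*(Q^3*Z) := by rw [← hR2]; ring
      rw [h3]
      field_simp
    rw [h2]
    calc lam^2*((1+3/(4*ε^2))*Z/μ) ≤ 1*((1+3/(4*ε^2))*Z/μ) :=
          mul_le_mul_of_nonneg_right h1 (by positivity)
      _ = (1+3/(4*ε^2))/μ*Z := by ring
  constructor
  · rw [hderiv]
    have : -2 * r ^ 2 / (μ * Q) + (-lam * μ * Rr) / (μ * Q)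
        - (1/(8*ε^2*μ) + (1 + 3/(4*ε^2))/μ) * Z
        ≤ -2*r^2/(μ*Q) + (-lam*μ*Rr)/(μ*Q)
          + (lam*(lam+1)*μ*(P^(-lam-2)))/(8*ε^2*(μ*Q)^2)
          - (1+3/(4*ε^2))*(-lam*μ*Rr)^2/(μ*Q)^3 := by
      ring_nf at e1 e2 ⊢
      linarith
    linarith [klow]
  · rw [hderiv]
    have hCZ : 0 ≤ (1/(8*ε^2*μ) + (1 + 3/(4*ε^2))/μ) * Z := by positivity
    linarith [kup, hCZ]
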